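/- Factorization of G₂(ℂ) characters at (x,−x,−x^{−2}), case k odd and l even: Let k be an odd positive integer and l an even nonnegative integer, and let x be a complex number with x ≠ 0, x⁴ ≠ 1 and x⁶ ≠ 1. Then Θ_{k,l}(x,−x,−x^{−2}) = − [(x^{(k+1)/2} − x^{−(k+1)/2}) / (x² − x^{−2})] · [(x^{3(k+2l+3)/2} − x^{−3(k+2l+3)/2}) / (x³ − x^{−3})]. (The two bracketed factors are the characters of irreducible SL(2,ℂ)-representations evaluated at (x²,x^{−2}) and (x³,x^{−3}) respectively.) -/

import Mathlib

/-- The Schur value `S_{(a,b,c)}(t₁,t₂,t₃) = det((t_j^{m_i})) / ∏_{i<j}(t_i − t_j)` with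
`(m₁,m₂,m₃) = (a+2,b+1,c)`: the character of the irreducible `GL(3,ℂ)`-representation with
highest weight `(a,b,c)` at the regular element `(t₁,t₂,t₃)`. -/
noncomputable def schur (a b c : ℕ) (t₁ t₂ t₃ : ℂ) : ℂ :=
  (Matrix.of ![![t₁ ^ (a + 2), t₂ ^ (a + 2), t₃ ^ (a + 2)],
      ![t₁ ^ (b + 1), t₂ ^ (b + 1), t₃ ^ (b + 1)],
      ![t₁ ^ c, t₂ ^ c, t₃ ^ c]]).det /
    ((t₁ - t₂) * (t₁ - t₃) * (t₂ - t₃))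

/-- The character `Θ_{k,l}` of the irreducible `G₂(ℂ)`-representation with highest weight
`kω₁ + lω₂`, evaluated at the element `(x, −x, −x⁻²)` of `SL(3,ℂ) ⊂ G₂(ℂ)` via
Proposition 24.48 of Fulton–Harris. -/
noncomputable def thetaG2 (k l : ℕ) (x : ℂ) : ℂ :=
  (schur (k + 2 * l + 1) (k + l + 1) 0 x (-x) (-(x ^ 2)⁻¹) -
      schur (k + 2 * l + 1) l 0 x (-x) (-(x ^ 2)⁻¹)) /
    (schur 1 1 0 x (-x) (-(x ^ 2)⁻¹) - schur 1 0 0 x (-x) (-(x ^ 2)⁻¹))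

lemma aux_d3 (x : ℂ) (hx : x ≠ 0) (hx6 : x ^ 6 ≠ 1) : x ^ 3 - (x ^ 3)⁻¹ ≠ 0 := by
  intro h
  apply hx6
  have h' : x ^ 3 = (x ^ 3)⁻¹ := sub_eq_zero.mp h
  calc x ^ 6 = x ^ 3 * x ^ 3 := by ring
    _ = x ^ 3 * (x ^ 3)⁻¹ := by nth_rewrite 2 [h']; rfl
    _ = 1 := mul_inv_cancel₀ (pow_ne_zero 3 hx)

lemma aux_D0 (x : ℂ) (hx : x ≠ 0) :
    (x - -x) * (x - -(x ^ 2)⁻¹) * (-x - -(x ^ 2)⁻¹) = -2 * (x ^ 3 - (x ^ 3)⁻¹) := by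
  field_simp
  ring

lemma den_val (x : ℂ) (hx : x ≠ 0) (hx6 : x ^ 6 ≠ 1) :
    schur 1 1 0 x (-x) (-(x ^ 2)⁻¹) - schur 1 0 0 x (-x) (-(x ^ 2)⁻¹) = -(x ^ 4 - 1) / x ^ 2 := by
  have hne : -2 * (x ^ 3 - (x ^ 3)⁻¹) ≠ 0 :=
    mul_ne_zero (by norm_num) (aux_d3 x hx hx6)
  simp only [schur, Matrix.det_fin_three, Matrix.of_apply, Matrix.cons_val', Matrix.cons_val_zero,
    Matrix.cons_val_one, Matrix.head_cons, Matrix.empty_val', Matrix.cons_val_fin_one,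
    Matrix.head_fin_const, Matrix.cons_val_two, Matrix.tail_cons, pow_zero, aux_D0 x hx]
  rw [div_sub_div_same, div_eq_div_iff hne (pow_ne_zero 2 hx)]
  field_simp
  have hc : x ^ 30 * x⁻¹ ^ 30 = 1 := by rw [← mul_pow, mul_inv_cancel₀ hx, one_pow]
  have hxi : x * x⁻¹ = 1 := mul_inv_cancel₀ hx
  linear_combination (2 * ((x * x⁻¹) ^ 5 + (x * x⁻¹) ^ 4 + (x * x⁻¹) ^ 3 + (x * x⁻¹) ^ 2 + x * x⁻¹ + 1)
    - 2 * x ^ 6 * (x * x⁻¹ + 1) - 2 * x ^ 4 * ((x * x⁻¹) ^ 3 + (x * x⁻¹) ^ 2 + x * x⁻¹ + 1)) * hxi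

lemma schur_val (m n : ℕ) (x : ℂ) (hx : x ≠ 0) (hx6 : x ^ 6 ≠ 1) :
    schur (2 * m) (2 * n) 0 x (-x) (-(x ^ 2)⁻¹) =
      (x ^ (2 * m + 2 * n + 3) - x ^ (2 * n + 1) * (x ^ (4 * m + 4))⁻¹) / (x ^ 3 - (x ^ 3)⁻¹) := by
  have h1 : (-x) ^ (2 * m + 2) = x ^ (2 * m + 2) := Even.neg_pow ⟨m + 1, by ring⟩ x
  have h2 : (-x) ^ (2 * n + 1) = -x ^ (2 * n + 1) := Odd.neg_pow ⟨n, by ring⟩ x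
  have h3 : (-(x ^ 2)⁻¹) ^ (2 * m + 2) = (x ^ (4 * m + 4))⁻¹ := by
    rw [Even.neg_pow ⟨m + 1, by ring⟩, inv_pow, ← pow_mul, show 2 * (2 * m + 2) = 4 * m + 4 from by ring]
  have h4 : (-(x ^ 2)⁻¹) ^ (2 * n + 1) = -(x ^ (4 * n + 2))⁻¹ := by
    rw [Odd.neg_pow ⟨n, by ring⟩, inv_pow, ← pow_mul, show 2 * (2 * n + 1) = 4 * n + 2 from by ring]
  have hne : -2 * (x ^ 3 - (x ^ 3)⁻¹) ≠ 0 :=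
    mul_ne_zero (by norm_num) (aux_d3 x hx hx6)
  simp only [schur, Matrix.det_fin_three, Matrix.of_apply, Matrix.cons_val', Matrix.cons_val_zero,
    Matrix.cons_val_one, Matrix.head_cons, Matrix.empty_val', Matrix.cons_val_fin_one,
    Matrix.head_fin_const, Matrix.cons_val_two, Matrix.tail_cons, pow_zero, aux_D0 x hx,
    h1, h2, h3, h4]
  rw [div_eq_div_iff hne (aux_d3 x hx hx6)]
  rw [show 2 * m + 2 = m * 2 + 2 from by ring, pow_add, pow_mul,
    show 2 * n + 1 = n * 2 + 1 from by ring, pow_add, pow_mul,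
    show 4 * m + 4 = m * 4 + 4 from by ring, pow_add (x) (m*4), pow_mul,
    show 4 * n + 2 = n * 4 + 2 from by ring, pow_add (x) (n*4), pow_mul,
    show 2 * m + 2 * n + 3 = m * 2 + (n * 2 + 3) from by ring, pow_add, pow_add, pow_mul, pow_mul]
  obtain ⟨M, hM0, hM⟩ : ∃ M : ℂ, M ≠ 0 ∧ x ^ m = M := ⟨x ^ m, pow_ne_zero m hx, rfl⟩
  obtain ⟨N, hN0, hN⟩ : ∃ N : ℂ, N ≠ 0 ∧ x ^ n = N := ⟨x ^ n, pow_ne_zero n hx, rfl⟩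
  rw [hM, hN]
  field_simp
  have hK : (M ^ 8 * M⁻¹ ^ 8) * (x ^ 13 * x⁻¹ ^ 13) * (N ^ 4 * N⁻¹ ^ 4) = 1 := by
    rw [← mul_pow, ← mul_pow, ← mul_pow, mul_inv_cancel₀ hM0, mul_inv_cancel₀ hx,
      mul_inv_cancel₀ hN0]
    norm_num
  ring

/-- Factorization of `G₂(ℂ)` characters at `(x,−x,−x⁻²)`, case `k` odd and `l` even:
`Θ_{k,l}(x,−x,−x⁻²) = −[(x^{(k+1)/2} − x^{−(k+1)/2})/(x² − x⁻²)] ·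
[(x^{3(k+2l+3)/2} − x^{−3(k+2l+3)/2})/(x³ − x⁻³)]`. -/
theorem g2FactorizationOddEven (k l : ℕ) (hk : Odd k) (hl : Even l) (x : ℂ) (hx : x ≠ 0)
    (hx4 : x ^ 4 ≠ 1) (hx6 : x ^ 6 ≠ 1) :
    thetaG2 k l x =
      -((x ^ ((k + 1) / 2) - x⁻¹ ^ ((k + 1) / 2)) / (x ^ 2 - x⁻¹ ^ 2)) *
        ((x ^ (3 * (k + 2 * l + 3) / 2) - x⁻¹ ^ (3 * (k + 2 * l + 3) / 2)) /
          (x ^ 3 - x⁻¹ ^ 3)) := by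
  obtain ⟨a, rfl⟩ := hk
  obtain ⟨b, rfl⟩ := hl
  rw [show (2 * a + 1 + 1) / 2 = a + 1 from by omega,
    show 3 * (2 * a + 1 + 2 * (b + b) + 3) / 2 = 3 * a + 6 * b + 6 from by omega]
  unfold thetaG2
  rw [show 2 * a + 1 + 2 * (b + b) + 1 = 2 * (a + 2 * b + 1) from by ring,
    show 2 * a + 1 + (b + b) + 1 = 2 * (a + b + 1) from by ring,
    show b + b = 2 * b from by ring,
    schur_val (a + 2 * b + 1) (a + b + 1) x hx hx6,
    schur_val (a + 2 * b + 1) b x hx hx6, den_val x hx hx6]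
  have hD : -(x ^ 4 - 1) / x ^ 2 ≠ 0 :=
    div_ne_zero (neg_ne_zero.mpr (sub_ne_zero.mpr hx4)) (pow_ne_zero 2 hx)
  have hd3 := aux_d3 x hx hx6
  have hd2 : x ^ 2 - (x ^ 2)⁻¹ ≠ 0 := by
    intro h
    apply hx4
    have h' : x ^ 2 = (x ^ 2)⁻¹ := sub_eq_zero.mp h
    calc x ^ 4 = x ^ 2 * x ^ 2 := by ring
      _ = x ^ 2 * (x ^ 2)⁻¹ := by nth_rewrite 2 [h']; rfl
      _ = 1 := mul_inv_cancel₀ (pow_ne_zero 2 hx)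
  simp only [inv_pow]
  rw [div_eq_iff hD, div_sub_div_same, div_eq_iff hd3]
  have p1 : x ^ (2 * (a + 2 * b + 1) + 2 * (a + b + 1) + 3) = (x ^ a) ^ 4 * (x ^ b) ^ 6 * x ^ 7 := by
    rw [← pow_mul, ← pow_mul, ← pow_add, ← pow_add]; congr 1; ring
  have p2 : x ^ (2 * (a + b + 1) + 1) = (x ^ a) ^ 2 * (x ^ b) ^ 2 * x ^ 3 := by
    rw [← pow_mul, ← pow_mul, ← pow_add, ← pow_add]; congr 1; ring
  have p3 : x ^ (4 * (a + 2 * b + 1) + 4) = (x ^ a) ^ 4 * (x ^ b) ^ 8 * x ^ 8 := by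
    rw [← pow_mul, ← pow_mul, ← pow_add, ← pow_add]; congr 1; ring
  have p4 : x ^ (2 * (a + 2 * b + 1) + 2 * b + 3) = (x ^ a) ^ 2 * (x ^ b) ^ 6 * x ^ 5 := by
    rw [← pow_mul, ← pow_mul, ← pow_add, ← pow_add]; congr 1; ring
  have p5 : x ^ (2 * b + 1) = (x ^ b) ^ 2 * x := by
    rw [← pow_mul, ← pow_succ]; congr 1; ring
  have p6 : x ^ (a + 1) = x ^ a * x := by rw [← pow_succ]
  have p7 : x ^ (3 * a + 6 * b + 6) = (x ^ a) ^ 3 * (x ^ b) ^ 6 * x ^ 6 := by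
    rw [← pow_mul, ← pow_mul, ← pow_add, ← pow_add]; congr 1; ring
  rw [p1, p2, p3, p4, p5, p6, p7]
  obtain ⟨A, hA0, hA⟩ : ∃ A : ℂ, A ≠ 0 ∧ x ^ a = A := ⟨x ^ a, pow_ne_zero a hx, rfl⟩
  obtain ⟨B, hB0, hB⟩ : ∃ B : ℂ, B ≠ 0 ∧ x ^ b = B := ⟨x ^ b, pow_ne_zero b hx, rfl⟩
  rw [hA, hB]
  have hZ : A ^ 4 * B ^ 6 * x ^ 12 + (-(A ^ 4 * B ^ 6 * x ^ 16) - A ^ 4 * B ^ 6 * x ^ 18) +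
      A ^ 4 * B ^ 6 * x ^ 22 ≠ 0 := by
    have e : A ^ 4 * B ^ 6 * x ^ 12 + (-(A ^ 4 * B ^ 6 * x ^ 16) - A ^ 4 * B ^ 6 * x ^ 18) +
        A ^ 4 * B ^ 6 * x ^ 22 = A ^ 4 * B ^ 6 * x ^ 12 * ((x ^ 4 - 1) * (x ^ 6 - 1)) := by ring
    rw [e]
    exact mul_ne_zero (mul_ne_zero (mul_ne_zero (pow_ne_zero _ hA0) (pow_ne_zero _ hB0))
      (pow_ne_zero _ hx)) (mul_ne_zero (sub_ne_zero.mpr hx4) (sub_ne_zero.mpr hx6))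
  field_simp
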